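/- If p is a prime dividing the central value e of a primitive magic square of squares, then p = 2 or p ≡ 1 (mod 4). -/

import Mathlib

/-- A magic square of squares: integers `a,…,i` whose squares, arranged in a
3×3 grid with rows `(a²,b²,c²)`, `(d²,e²,f²)`, `(g²,h²,i²)`, are pairwise
distinct and all rows, columns and both main diagonals sum to `T`. -/
def IsMagicSquareOfSquares (a b c d e f g h i T : ℤ) : Prop :=
  ([a^2, b^2, c^2, d^2, e^2, f^2, g^2, h^2, i^2] : List ℤ).Pairwise (· ≠ ·) ∧
  a^2 + b^2 + c^2 = T ∧ d^2 + e^2 + f^2 = T ∧ g^2 + h^2 + i^2 = T ∧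
  a^2 + d^2 + g^2 = T ∧ b^2 + e^2 + h^2 = T ∧ c^2 + f^2 + i^2 = T ∧
  a^2 + e^2 + i^2 = T ∧ c^2 + e^2 + g^2 = T

/-- A magic square of squares is primitive if the gcd of its nine entries is 1. -/
def IsPrimitive (a b c d e f g h i : ℤ) : Prop :=
  Int.gcd (a^2) (Int.gcd (b^2) (Int.gcd (c^2) (Int.gcd (d^2) (Int.gcd (e^2)
    (Int.gcd (f^2) (Int.gcd (g^2) (Int.gcd (h^2) (i^2)))))))) = 1

lemma key_three_mod_four (p : ℕ) (hp : p.Prime) (h3 : p % 4 = 3) (x y : ℤ)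
    (h : (p : ℤ) ∣ x ^ 2 + y ^ 2) : (p : ℤ) ∣ x ∧ (p : ℤ) ∣ y := by
  haveI : Fact p.Prime := ⟨hp⟩
  have hz : (x : ZMod p) ^ 2 + (y : ZMod p) ^ 2 = 0 := by
    have := (ZMod.intCast_zmod_eq_zero_iff_dvd (x ^ 2 + y ^ 2) p).2 h
    push_cast at this
    exact this
  have hy0 : (y : ZMod p) = 0 := by
    by_contra hy
    have hsq : ((x : ZMod p) * (y : ZMod p)⁻¹) ^ 2 = -1 := by
      have hyinv : (y : ZMod p) * (y : ZMod p)⁻¹ = 1 := ZMod.mul_inv_of_unit _ (Ne.isUnit hy)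
      have : (x : ZMod p) ^ 2 = -(y : ZMod p) ^ 2 := by linear_combination hz
      calc ((x : ZMod p) * (y : ZMod p)⁻¹) ^ 2
          = (x : ZMod p) ^ 2 * ((y : ZMod p)⁻¹) ^ 2 := by ring
        _ = -((y : ZMod p) * (y : ZMod p)⁻¹) ^ 2 := by rw [this]; ring
        _ = -1 := by rw [hyinv]; ring
    have : IsSquare (-1 : ZMod p) :=
      ⟨(x : ZMod p) * (y : ZMod p)⁻¹, by rw [← hsq]; ring⟩
    exact (ZMod.exists_sq_eq_neg_one_iff.1 this) h3
  have hx0 : (x : ZMod p) = 0 := by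
    have : (x : ZMod p) ^ 2 = 0 := by rw [hy0] at hz; simpa using hz
    exact pow_eq_zero_iff (n := 2) (by norm_num) |>.1 this
  exact ⟨(ZMod.intCast_zmod_eq_zero_iff_dvd x p).1 hx0,
    (ZMod.intCast_zmod_eq_zero_iff_dvd y p).1 hy0⟩

theorem prime_div_center_eq_two_or_one_mod_four (a b c d e f g h i T : ℤ)
    (hms : IsMagicSquareOfSquares a b c d e f g h i T)
    (hprim : IsPrimitive a b c d e f g h i)
    (p : ℕ) (hp : p.Prime) (hdvd : (p : ℤ) ∣ e) :
    p = 2 ∨ p % 4 = 1 := by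
  by_cases hp2 : p = 2
  · exact Or.inl hp2
  have hodd : p % 2 = 1 := hp.eq_two_or_odd.resolve_left hp2
  by_cases h14 : p % 4 = 1
  · exact Or.inr h14
  exfalso
  have h3 : p % 4 = 3 := by omega
  obtain ⟨-, h1, h2, h3', h4, h5, h6, h7, h8⟩ := hms
  have hT : T = 3 * e ^ 2 := by linarith
  have he2 : (p : ℤ) ∣ 2 * e ^ 2 := (dvd_pow hdvd two_ne_zero).mul_left 2
  have hai : (p : ℤ) ∣ a ∧ (p : ℤ) ∣ i :=
    key_three_mod_four p hp h3 a i (by rw [show a ^ 2 + i ^ 2 = 2 * e ^ 2 by linarith]; exact he2)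
  have hbh : (p : ℤ) ∣ b ∧ (p : ℤ) ∣ h :=
    key_three_mod_four p hp h3 b h (by rw [show b ^ 2 + h ^ 2 = 2 * e ^ 2 by linarith]; exact he2)
  have hcg : (p : ℤ) ∣ c ∧ (p : ℤ) ∣ g :=
    key_three_mod_four p hp h3 c g (by rw [show c ^ 2 + g ^ 2 = 2 * e ^ 2 by linarith]; exact he2)
  have hdf : (p : ℤ) ∣ d ∧ (p : ℤ) ∣ f :=
    key_three_mod_four p hp h3 d f (by rw [show d ^ 2 + f ^ 2 = 2 * e ^ 2 by linarith]; exact he2)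
  have sq : ∀ x : ℤ, (p : ℤ) ∣ x → (p : ℤ) ∣ x ^ 2 := fun x hx => dvd_pow hx two_ne_zero
  have hg : (p : ℤ) ∣ ((Int.gcd (a^2) (Int.gcd (b^2) (Int.gcd (c^2) (Int.gcd (d^2)
      (Int.gcd (e^2) (Int.gcd (f^2) (Int.gcd (g^2) (Int.gcd (h^2) (i^2)))))))) : ℕ) : ℤ) := Int.dvd_coe_gcd (sq a hai.1) (Int.dvd_coe_gcd (sq b hbh.1) (Int.dvd_coe_gcd (sq c hcg.1)
      (Int.dvd_coe_gcd (sq d hdf.1) (Int.dvd_coe_gcd (sq e hdvd) (Int.dvd_coe_gcd (sq f hdf.2)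
      (Int.dvd_coe_gcd (sq g hcg.2) (Int.dvd_coe_gcd (sq h hbh.2) (sq i hai.2))))))))
  rw [hprim] at hg
  norm_num at hg
  have := Int.le_of_dvd one_pos hg
  have := hp.two_le
  omega
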